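/- Every rational-valued character of a finite group G is a ℤ-linear combination of the characteristic functions Φ₁, …, Φ_m of the equivalence classes of the relation x ≡ y iff ⟨x⟩ is conjugate to ⟨y⟩ in G. -/

import Mathlib

/-- The induced character `(1_C)^G` of the trivial character of a subgroup `C`. -/
noncomputable def indTriv (G : Type) [Group G] [Fintype G] (C : Subgroup G) : G → ℂ :=
  fun g => (Nat.card {x : G // x⁻¹ * g * x ∈ C} : ℂ) / (Nat.card C : ℂ)

/-- `χ : G → ℂ` is a character: the trace of a nonzero finite-dimensional complex rep. -/
def IsCharacter (G : Type) [Group G] (χ : G → ℂ) : Prop :=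
  ∃ V : FDRep ℂ G, χ = V.character ∧ χ ≠ 0

/-- `χ` is an irreducible character of `G`. -/
def IsIrredChar (G : Type) [Group G] (χ : G → ℂ) : Prop :=
  ∃ V : FDRep ℂ G, CategoryTheory.Simple V ∧ χ = V.character

/-- All values of `χ` are rational. -/
def IsRatValued {G : Type} (χ : G → ℂ) : Prop := ∀ g : G, ∃ q : ℚ, χ g = (q : ℂ)

/-- Subgroups `H` and `K` are conjugate in `G`. -/
def SubConj {G : Type} [Group G] (H K : Subgroup G) : Prop :=
  ∃ g : G, Subgroup.map (MulAut.conj g).toMonoidHom H = K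

/-- The ℂ-subspace of `G → ℂ` spanned by the rational valued characters of `G`. -/
noncomputable def ratCharSpan (G : Type) [Group G] : Submodule ℂ (G → ℂ) :=
  Submodule.span ℂ {χ : G → ℂ | IsCharacter G χ ∧ IsRatValued χ}

/-- The number of conjugacy classes of cyclic subgroups of `G`. -/
noncomputable def numCyclicClasses (G : Type) [Group G] : ℕ :=
  Nat.card (Quot (fun H K : {H : Subgroup G // IsCyclic ↥H} => SubConj H.1 K.1))

/-- Indicator function of the set of `g` with `⟨g⟩` conjugate to `⟨x⟩`. -/
noncomputable def Phi (G : Type) [Group G] (x : G) : G → ℂ := fun g =>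
  letI := Classical.propDecidable
  if SubConj (Subgroup.zpowers g) (Subgroup.zpowers x) then 1 else 0

/-- The cyclotomic field `ℚ(e^{2πi/n})` as a subfield of `ℂ`. -/
noncomputable def cycField (n : ℕ) : IntermediateField ℚ ℂ :=
  IntermediateField.adjoin ℚ ({Complex.exp (2 * Real.pi * Complex.I / n)} : Set ℂ)

/-- `ψ` is in the `Gal(ℚ(ζ_n)/ℚ)`-orbit of `χ` (acting on character values). -/
def galRel (G : Type) [Group G] (n : ℕ) (χ ψ : G → ℂ) : Prop :=
  ∃ σ : cycField n ≃ₐ[ℚ] cycField n,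
    ∀ g : G, ∃ h : χ g ∈ cycField n, (σ ⟨χ g, h⟩ : ℂ) = ψ g

/-- The field `ℚ(χ)` generated by the values of `χ`. -/
noncomputable def charField (G : Type) (χ : G → ℂ) : IntermediateField ℚ ℂ :=
  IntermediateField.adjoin ℚ (Set.range χ)

/-- The rationalization `χ^rat = ∑_{σ ∈ Gal(ℚ(χ)/ℚ)} χ^σ`. -/
noncomputable def ratzn (G : Type) [Group G] (χ : G → ℂ) : G → ℂ :=
  fun g => ∑ᶠ σ : charField G χ ≃ₐ[ℚ] charField G χ,
    (σ ⟨χ g, IntermediateField.subset_adjoin ℚ _ ⟨g, rfl⟩⟩ : ℂ)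

/-- The induced character of a character `φ` of a subgroup `H`. -/
noncomputable def inducedChar (G : Type) [Group G] [Fintype G] (H : Subgroup G)
    (φ : H → ℂ) : G → ℂ := fun g =>
  letI := Classical.propDecidable
  (Nat.card H : ℂ)⁻¹ * ∑ x : G, if h : x⁻¹ * g * x ∈ H then φ ⟨x⁻¹ * g * x, h⟩ else 0


section Aux
open Finset

lemma key_trace (V : Type) [AddCommGroup V] [Module ℂ V] [FiniteDimensional ℂ V]
    (f : V →ₗ[ℂ] V) (n : ℕ) (hn : 0 < n) (hf : f ^ n = 1) :
    ∃ m : ℕ → ℕ, ∀ k : ℕ,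
      LinearMap.trace ℂ V (f ^ k) =
        ∑ j ∈ Finset.range n, (m j : ℂ) *
          Complex.exp (2 * Real.pi * Complex.I / n) ^ (j * k) := by
  set ζ : ℂ := Complex.exp (2 * Real.pi * Complex.I / n) with hζdef
  have hζ : IsPrimitiveRoot ζ n := Complex.isPrimitiveRoot_exp n hn.ne'
  have hζn : ζ ^ n = 1 := hζ.pow_eq_one
  have hζ0 : ζ ≠ 0 := fun h => by simp [h, zero_pow hn.ne'] at hζn
  set w : ℂ := ζ⁻¹ with hwdef
  have hwζ : ζ * w = 1 := mul_inv_cancel₀ hζ0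
  have hw : IsPrimitiveRoot w n := hζ.inv
  have hwn : w ^ n = 1 := hw.pow_eq_one
  have hn0 : (n : ℂ) ≠ 0 := Nat.cast_ne_zero.mpr hn.ne'
  set S : ℕ → (V →ₗ[ℂ] V) := fun j => ∑ i ∈ Finset.range n, w ^ (i * j) • f ^ i with hS
  set P : ℕ → (V →ₗ[ℂ] V) := fun j => (n : ℂ)⁻¹ • S j with hP
  have hfS : ∀ j, f * S j = ζ ^ j • S j := by
    intro j
    set g : ℕ → (V →ₗ[ℂ] V) := fun i => (ζ ^ j * w ^ (i * j)) • f ^ i with hg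
    have hg1 : ∀ i, g (i + 1) = w ^ (i * j) • f ^ (i + 1) := by
      intro i
      have hc : ζ ^ j * w ^ ((i + 1) * j) = w ^ (i * j) := by
        calc ζ ^ j * w ^ ((i + 1) * j) = (ζ * w) ^ j * w ^ (i * j) := by
              rw [add_mul, one_mul, pow_add, mul_pow]; ring
          _ = w ^ (i * j) := by rw [hwζ, one_pow, one_mul]
      rw [hg]; simp only; rw [hc]
    have hgn : g n = g 0 := by
      have hwnj : w ^ (n * j) = 1 := by rw [pow_mul, hwn, one_pow]
      rw [hg]; simp only [zero_mul, pow_zero, mul_one, hf, hwnj]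
    have hshift : ∑ i ∈ Finset.range n, g (i + 1) = ∑ i ∈ Finset.range n, g i := by
      have h1 := Finset.sum_range_succ' g n
      have h2 := Finset.sum_range_succ g n
      rw [h2] at h1
      -- h1 : ∑ range n g + g n = (∑ range n, g (i+1)) + g 0
      rw [hgn] at h1
      exact (add_right_cancel h1).symm
    calc f * S j = ∑ i ∈ Finset.range n, w ^ (i * j) • f ^ (i + 1) := by
          rw [hS]; simp only; rw [Finset.mul_sum]
          refine Finset.sum_congr rfl fun i _ => ?_
          rw [mul_smul_comm, ← pow_succ']
      _ = ∑ i ∈ Finset.range n, g (i + 1) := by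
          refine Finset.sum_congr rfl fun i _ => (hg1 i).symm
      _ = ∑ i ∈ Finset.range n, g i := hshift
      _ = ζ ^ j • S j := by
          rw [hS]; simp only [Finset.smul_sum]
          refine Finset.sum_congr rfl fun i _ => ?_
          rw [hg]; simp only [smul_smul]
  have hfP : ∀ j, f * P j = ζ ^ j • P j := by
    intro j
    rw [hP]; simp only
    rw [mul_smul_comm, hfS, smul_comm]
  have hpowP : ∀ k j, f ^ k * P j = ζ ^ (j * k) • P j := by
    intro k j
    induction k with
    | zero => simp
    | succ k ih =>
      rw [pow_succ, mul_assoc, hfP, mul_smul_comm, ih, smul_smul, ← pow_add]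
      congr 1
      ring
  have hidem : ∀ j, P j * P j = P j := by
    intro j
    have hSP : S j * P j = (n : ℂ) • P j := by
      rw [hS]; simp only
      rw [Finset.sum_mul]
      have : ∀ i ∈ Finset.range n, (w ^ (i * j) • f ^ i) * P j = P j := by
        intro i _
        rw [smul_mul_assoc, hpowP, smul_smul, mul_comm j i, ← mul_pow, mul_comm w ζ, hwζ,
          one_pow, one_smul]
      rw [Finset.sum_congr rfl this, Finset.sum_const, Finset.card_range,
        ← Nat.cast_smul_eq_nsmul ℂ]
    rw [hP]; simp only
    rw [smul_mul_assoc, hSP, smul_smul, inv_mul_cancel₀ hn0, one_smul]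
  have hsum : ∑ j ∈ Finset.range n, P j = 1 := by
    have hSsum : ∑ j ∈ Finset.range n, S j = (n : ℂ) • 1 := by
      rw [hS]; simp only
      rw [Finset.sum_comm]
      have : ∀ i ∈ Finset.range n,
          ∑ j ∈ Finset.range n, w ^ (i * j) • f ^ i
            = (if i = 0 then (n : ℂ) else 0) • f ^ i := by
        intro i hi
        rw [← Finset.sum_smul]
        congr 1
        have : ∀ j ∈ Finset.range n, w ^ (i * j) = (w ^ i) ^ j := fun j _ => pow_mul w i j
        rw [Finset.sum_congr rfl this]
        by_cases h0 : i = 0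
        · simp [h0]
        · rw [if_neg h0]
          have hne : w ^ i ≠ 1 :=
            hw.pow_ne_one_of_pos_of_lt h0 (Finset.mem_range.mp hi)
          rw [geom_sum_eq hne]
          rw [← pow_mul, mul_comm i n, pow_mul, hwn, one_pow, sub_self, zero_div]
      rw [Finset.sum_congr rfl this,
        Finset.sum_eq_single_of_mem 0 (Finset.mem_range.mpr hn)
          (fun b _ hb => by rw [if_neg hb, zero_smul])]
      simp
    rw [hP]; simp only
    rw [← Finset.smul_sum, hSsum, smul_smul, inv_mul_cancel₀ hn0, one_smul]
  have htr : ∀ j, ∃ mj : ℕ, LinearMap.trace ℂ V (P j) = mj := by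
    intro j
    have hcomp : P j ∘ₗ P j = P j := by rw [← Module.End.mul_eq_comp]; exact hidem j
    obtain ⟨p, hp⟩ := (LinearMap.isProj_iff_isIdempotentElem (P j)).mpr (hidem j)
    exact ⟨Module.finrank ℂ p, hp.trace⟩
  choose m hm using htr
  refine ⟨m, fun k => ?_⟩
  calc LinearMap.trace ℂ V (f ^ k)
      = LinearMap.trace ℂ V (f ^ k * ∑ j ∈ Finset.range n, P j) := by rw [hsum, mul_one]
    _ = ∑ j ∈ Finset.range n, (m j : ℂ) * ζ ^ (j * k) := by
        rw [Finset.mul_sum, map_sum]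
        refine Finset.sum_congr rfl fun j _ => ?_
        rw [hpowP, map_smul, hm j, smul_eq_mul, mul_comm]

lemma char_pow {G : Type} [Group G] [Fintype G] (V : FDRep ℂ G) (g : G) :
    ∃ m : ℕ → ℕ, ∀ k : ℕ,
      V.character (g ^ k) =
        ∑ j ∈ Finset.range (orderOf g), (m j : ℂ) *
          Complex.exp (2 * Real.pi * Complex.I / (orderOf g)) ^ (j * k) := by
  have hn : 0 < orderOf g := orderOf_pos g
  have hf : (V.ρ g) ^ (orderOf g) = 1 := by
    rw [← map_pow, pow_orderOf_eq_one, map_one]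
  obtain ⟨m, hm⟩ := key_trace V (V.ρ g) (orderOf g) hn hf
  refine ⟨m, fun k => ?_⟩
  have : V.character (g ^ k) = LinearMap.trace ℂ V ((V.ρ g) ^ k) := by
    rw [FDRep.character, map_pow]
  rw [this, hm]

lemma gal_step (n k : ℕ) (hn : 0 < n) (hk : Nat.Coprime k n) (m : ℕ → ℕ) (q : ℚ)
    (hq : ∑ j ∈ Finset.range n, (m j : ℂ) * Complex.exp (2 * Real.pi * Complex.I / n) ^ j
      = (q : ℂ)) :
    ∑ j ∈ Finset.range n, (m j : ℂ) * Complex.exp (2 * Real.pi * Complex.I / n) ^ (j * k)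
      = (q : ℂ) := by
  set ζ : ℂ := Complex.exp (2 * Real.pi * Complex.I / n) with hζdef
  have hζ : IsPrimitiveRoot ζ n := Complex.isPrimitiveRoot_exp n hn.ne'
  have hζk : IsPrimitiveRoot (ζ ^ k) n := hζ.pow_of_coprime k hk
  set Q : Polynomial ℚ :=
    (∑ j ∈ Finset.range n, Polynomial.C ((m j : ℚ)) * Polynomial.X ^ j) - Polynomial.C q with hQ
  have haeval : ∀ z : ℂ, Polynomial.aeval z Q
      = (∑ j ∈ Finset.range n, (m j : ℂ) * z ^ j) - (q : ℂ) := by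
    intro z
    rw [hQ]
    simp [Rat.cast_natCast]
  have hzero : Polynomial.aeval ζ Q = 0 := by rw [haeval, hq, sub_self]
  have hdvd : minpoly ℚ ζ ∣ Q := minpoly.dvd ℚ ζ hzero
  have h1 : Polynomial.cyclotomic n ℚ = minpoly ℚ ζ := Polynomial.cyclotomic_eq_minpoly_rat hζ hn
  have h2 : Polynomial.cyclotomic n ℚ = minpoly ℚ (ζ ^ k) :=
    Polynomial.cyclotomic_eq_minpoly_rat hζk hn
  have hdvd2 : minpoly ℚ (ζ ^ k) ∣ Q := by rw [← h2, h1]; exact hdvd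
  obtain ⟨R, hR⟩ := hdvd2
  have hz2 : Polynomial.aeval (ζ ^ k) Q = 0 := by
    rw [hR, map_mul, minpoly.aeval, zero_mul]
  rw [haeval, sub_eq_zero] at hz2
  rw [← hz2]
  refine Finset.sum_congr rfl fun j _ => ?_
  rw [← pow_mul, mul_comm k j]

lemma int_step (n : ℕ) (hn : 0 < n) (m : ℕ → ℕ) (q : ℚ)
    (hq : ∑ j ∈ Finset.range n, (m j : ℂ) * Complex.exp (2 * Real.pi * Complex.I / n) ^ j
      = (q : ℂ)) : ∃ z : ℤ, (z : ℚ) = q := by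
  set ζ : ℂ := Complex.exp (2 * Real.pi * Complex.I / n) with hζdef
  have hζ : IsPrimitiveRoot ζ n := Complex.isPrimitiveRoot_exp n hn.ne'
  have hζint : IsIntegral ℤ ζ := hζ.isIntegral hn
  have hsumint : IsIntegral ℤ ((q : ℚ) : ℂ) := by
    rw [← hq]
    refine IsIntegral.sum _ fun j _ => IsIntegral.mul ?_ (hζint.pow j)
    have := isIntegral_algebraMap (R := ℤ) (A := ℂ) (x := (m j : ℤ))
    simpa using this
  have hq' : IsIntegral ℤ q := by
    rw [show ((q : ℚ) : ℂ) = algebraMap ℚ ℂ q from (eq_ratCast (algebraMap ℚ ℂ) q).symm]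
      at hsumint
    exact (isIntegral_algebraMap_iff (algebraMap ℚ ℂ).injective).mp hsumint
  obtain ⟨z, hz⟩ := IsIntegrallyClosed.isIntegral_iff.mp hq'
  exact ⟨z, by rw [← eq_intCast (algebraMap ℤ ℚ) z]; exact hz⟩

section Conj
variable {G : Type} [Group G]

lemma subconj_refl (H : Subgroup G) : SubConj H H :=
  ⟨1, by ext x; simp⟩

lemma subconj_comp (a b : G) (H : Subgroup G) :
    Subgroup.map (MulAut.conj a).toMonoidHom (Subgroup.map (MulAut.conj b).toMonoidHom H)
      = Subgroup.map (MulAut.conj (a * b)).toMonoidHom H := by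
  rw [Subgroup.map_map]
  congr 1
  ext x
  simp [mul_assoc]

lemma subconj_symm {H K : Subgroup G} : SubConj H K → SubConj K H := by
  rintro ⟨g, rfl⟩
  exact ⟨g⁻¹, by rw [subconj_comp, inv_mul_cancel]; ext x; simp⟩

lemma subconj_trans {H K L : Subgroup G} : SubConj H K → SubConj K L → SubConj H L := by
  rintro ⟨g, rfl⟩ ⟨g', rfl⟩
  exact ⟨g' * g, (subconj_comp g' g H).symm⟩

end Conj

lemma char_const {G : Type} [Group G] [Fintype G] (V : FDRep ℂ G)
    (hrat : ∀ g : G, ∃ q : ℚ, V.character g = (q : ℂ)) {x y : G}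
    (h : SubConj (Subgroup.zpowers x) (Subgroup.zpowers y)) :
    V.character x = V.character y := by
  obtain ⟨c, hc⟩ := h
  have hzp : Subgroup.zpowers (c * x * c⁻¹) = Subgroup.zpowers y := by
    rw [← hc, MonoidHom.map_zpowers]
    congr 1
  have hcx : V.character (c * x * c⁻¹) = V.character x := FDRep.char_conj V x c
  -- write c*x*c⁻¹ = y^k
  have hmem : c * x * c⁻¹ ∈ Subgroup.zpowers y := by
    rw [← hzp]; exact Subgroup.mem_zpowers _
  obtain ⟨k, hk⟩ := (mem_powers_iff_mem_zpowers).mpr hmem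
  dsimp only at hk
  set n := orderOf y with hn
  have hnpos : 0 < n := orderOf_pos y
  have hord : orderOf (y ^ k) = n := by
    rw [← Nat.card_zpowers, hk, hzp, Nat.card_zpowers]
  have hcop : Nat.Coprime k n := by
    have h1 : n / Nat.gcd n k = n := by rw [← orderOf_pow (n := k) y]; exact hord
    have h2 : Nat.gcd n k = 1 := (Nat.div_eq_self.mp h1).resolve_left hnpos.ne'
    exact Nat.Coprime.symm h2
  obtain ⟨m, hm⟩ := char_pow V y
  obtain ⟨q, hq⟩ := hrat y
  have hq1 : ∑ j ∈ Finset.range n, (m j : ℂ)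
      * Complex.exp (2 * Real.pi * Complex.I / n) ^ j = (q : ℂ) := by
    have := hm 1
    simp only [pow_one, mul_one] at this
    rw [← this, hq]
  have := gal_step n k hnpos hcop m q hq1
  rw [← hcx, ← hk, hm k, this, hq]

lemma char_int {G : Type} [Group G] [Fintype G] (V : FDRep ℂ G)
    (hrat : ∀ g : G, ∃ q : ℚ, V.character g = (q : ℂ)) (x : G) :
    ∃ z : ℤ, V.character x = (z : ℂ) := by
  obtain ⟨m, hm⟩ := char_pow V x
  obtain ⟨q, hq⟩ := hrat x
  have hq1 : ∑ j ∈ Finset.range (orderOf x), (m j : ℂ)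
      * Complex.exp (2 * Real.pi * Complex.I / (orderOf x)) ^ j = (q : ℂ) := by
    have := hm 1
    simp only [pow_one, mul_one] at this
    rw [← this, hq]
  obtain ⟨z, hz⟩ := int_step (orderOf x) (orderOf_pos x) m q hq1
  exact ⟨z, by rw [hq, ← hz]; push_cast; ring⟩


end Aux

theorem stmt6 (G : Type) [Group G] [Fintype G] (χ : G → ℂ)
    (h1 : IsCharacter G χ) (h2 : IsRatValued χ) :
    ∃ a : G → ℤ, ∀ g : G, χ g = ∑ x : G, (a x : ℂ) * Phi G x g := by
  obtain ⟨V, hV, -⟩ := h1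
  subst hV
  classical
  set r : G → G → Prop := fun a b => SubConj (Subgroup.zpowers a) (Subgroup.zpowers b) with hr
  have requiv : Equivalence r := ⟨fun a => subconj_refl _, subconj_symm, subconj_trans⟩
  let s : Setoid G := ⟨r, requiv⟩
  let rep : G → G := fun g => (@Quotient.mk _ s g).out
  have hrep1 : ∀ g, r (rep g) g := fun g => @Quotient.mk_out _ s g
  have hrep2 : ∀ {a b}, r a b → rep a = rep b := by
    intro a b hab
    show (@Quotient.mk _ s a).out = (@Quotient.mk _ s b).out
    rw [Quotient.sound hab]
  choose zv hzv using char_int V h2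
  refine ⟨fun x => if rep x = x then zv x else 0, fun g => ?_⟩
  rw [Finset.sum_eq_single_of_mem (rep g) (Finset.mem_univ _)]
  · have h3 : rep (rep g) = rep g := hrep2 (hrep1 g)
    have h4 : r g (rep g) := requiv.symm (hrep1 g)
    beta_reduce
    rw [if_pos h3]
    have : Phi G (rep g) g = 1 := by
      rw [Phi]
      exact if_pos h4
    rw [this, mul_one, ← hzv (rep g)]
    exact char_const V h2 h4
  · intro x _ hx
    by_cases hP : SubConj (Subgroup.zpowers g) (Subgroup.zpowers x)
    · have : rep x = rep g := hrep2 (requiv.symm hP)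
      have hxx : ¬ (rep x = x) := fun hh => hx (by rw [← hh, this])
      beta_reduce
      rw [if_neg hxx]
      push_cast
      rw [zero_mul]
    · have : Phi G x g = 0 := by rw [Phi]; exact if_neg hP
      rw [this, mul_zero]
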